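/- Under the hypotheses that Θ = A₁H₁⁻¹A₁ᵀ + A₂H₂⁻¹A₂ᵀ is positive definite (H₁, H₂ symmetric positive definite) and Bᵀ Θ⁻¹ B invertible, the matrix M = [A₁ A₂]ᵀ X [A₁ A₂], with X = Θ⁻¹ − Θ⁻¹B(BᵀΘ⁻¹B)⁻¹BᵀΘ⁻¹, is positive semi-definite; hence the CM covariance P = diag(H₁⁻¹, H₂⁻¹) − diag(H₁⁻¹,H₂⁻¹) M diag(H₁⁻¹,H₂⁻¹) satisfies P ⪯ diag(H₁⁻¹, H₂⁻¹). -/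

import Mathlib

open Matrix

lemma psd_isUnit_det_posDef {n : ℕ} {S : Matrix (Fin n) (Fin n) ℝ}
    (h : S.PosSemidef) (hd : IsUnit S.det) : S.PosDef := by
  refine PosDef.of_dotProduct_mulVec_pos h.1 fun x hx => lt_of_le_of_ne (h.dotProduct_mulVec_nonneg x) fun he => hx ?_
  have h0 : S *ᵥ x = 0 := (h.dotProduct_mulVec_zero_iff x).mp he.symm
  have hinj := Matrix.mulVec_injective_iff_isUnit.mpr ((Matrix.isUnit_iff_isUnit_det S).mpr hd)
  have := hinj (a₁ := x) (a₂ := 0) (by simp [h0])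
  exact this

theorem submap_consistency
    (n₁ n₂ m k : ℕ)
    (H₁ : Matrix (Fin n₁) (Fin n₁) ℝ) (hH₁ : H₁.PosDef)
    (H₂ : Matrix (Fin n₂) (Fin n₂) ℝ) (hH₂ : H₂.PosDef)
    (A₁ : Matrix (Fin m) (Fin n₁) ℝ) (A₂ : Matrix (Fin m) (Fin n₂) ℝ)
    (B : Matrix (Fin m) (Fin k) ℝ)
    (Θ : Matrix (Fin m) (Fin m) ℝ)
    (hΘdef : Θ = A₁ * H₁⁻¹ * A₁ᵀ + A₂ * H₂⁻¹ * A₂ᵀ)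
    (hΘ : Θ.PosDef)
    (hBB : IsUnit (Bᵀ * Θ⁻¹ * B).det)
    (X : Matrix (Fin m) (Fin m) ℝ)
    (hX : X = Θ⁻¹ - Θ⁻¹ * B * (Bᵀ * Θ⁻¹ * B)⁻¹ * Bᵀ * Θ⁻¹)
    (M : Matrix (Fin n₁ ⊕ Fin n₂) (Fin n₁ ⊕ Fin n₂) ℝ)
    (hM : M = (Matrix.fromCols A₁ A₂)ᵀ * X * Matrix.fromCols A₁ A₂)
    (D P : Matrix (Fin n₁ ⊕ Fin n₂) (Fin n₁ ⊕ Fin n₂) ℝ)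
    (hD : D = Matrix.fromBlocks H₁⁻¹ 0 0 H₂⁻¹)
    (hP : P = D - D * M * D) :
    M.PosSemidef ∧ (D - P).PosSemidef := by
  have hΘinv : (Θ⁻¹).PosDef := hΘ.inv
  have hBt : Bᴴ = Bᵀ := conjTranspose_eq_transpose_of_trivial B
  have hΘt : Θ⁻¹ᵀ = Θ⁻¹ := by
    have := hΘinv.1.eq
    rwa [conjTranspose_eq_transpose_of_trivial] at this
  have hS_psd : (Bᵀ * Θ⁻¹ * B).PosSemidef := by
    have := hΘinv.posSemidef.conjTranspose_mul_mul_same B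
    rwa [hBt] at this
  have hS : (Bᵀ * Θ⁻¹ * B).PosDef := psd_isUnit_det_posDef hS_psd hBB
  haveI : Invertible (Bᵀ * Θ⁻¹ * B) := Matrix.invertibleOfIsUnitDet _ hBB
  -- the block matrix [Θ⁻¹, Θ⁻¹B; BᵀΘ⁻¹, BᵀΘ⁻¹B] is PSD
  have hblockPSD : (fromBlocks Θ⁻¹ (Θ⁻¹ * B) ((Θ⁻¹ * B)ᴴ) (Bᵀ * Θ⁻¹ * B)).PosSemidef := by
    have h1 := hΘinv.posSemidef.conjTranspose_mul_mul_same (fromCols (1 : Matrix (Fin m) (Fin m) ℝ) B)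
    have heq : (fromCols (1 : Matrix (Fin m) (Fin m) ℝ) B)ᴴ * Θ⁻¹ *
        fromCols (1 : Matrix (Fin m) (Fin m) ℝ) B
        = fromBlocks Θ⁻¹ (Θ⁻¹ * B) ((Θ⁻¹ * B)ᴴ) (Bᵀ * Θ⁻¹ * B) := by
      rw [conjTranspose_fromCols_eq_fromRows_conjTranspose, fromRows_mul,
        fromRows_mul_fromCols]
      congr 1 <;> simp [Matrix.mul_assoc, conjTranspose_mul, hΘinv.1.eq, hBt, hΘt]
    rwa [heq] at h1
  have hXps : X.PosSemidef := by
    have := (PosDef.fromBlocks₂₂ Θ⁻¹ (Θ⁻¹ * B) hS).mp hblockPSD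
    have heq : Θ⁻¹ - Θ⁻¹ * B * (Bᵀ * Θ⁻¹ * B)⁻¹ * (Θ⁻¹ * B)ᴴ = X := by
      rw [hX, conjTranspose_mul, hΘinv.1.eq, hBt]
      simp [Matrix.mul_assoc]
    rwa [heq] at this
  have hMps : M.PosSemidef := by
    have := hXps.conjTranspose_mul_mul_same (fromCols A₁ A₂)
    rwa [hM, ← conjTranspose_eq_transpose_of_trivial]
  refine ⟨hMps, ?_⟩
  have hDP : D - P = D * M * D := by rw [hP, sub_sub_cancel]
  have hDH : Dᴴ = D := by
    rw [hD, conjTranspose_eq_transpose_of_trivial, fromBlocks_transpose, transpose_nonsing_inv,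
      transpose_nonsing_inv]
    have e₁ : H₁ᵀ = H₁ := by
      have := hH₁.1.eq; rwa [conjTranspose_eq_transpose_of_trivial] at this
    have e₂ : H₂ᵀ = H₂ := by
      have := hH₂.1.eq; rwa [conjTranspose_eq_transpose_of_trivial] at this
    simp [e₁, e₂]
  have := hMps.conjTranspose_mul_mul_same D
  rw [hDH] at this
  rwa [hDP]
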